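/- A discriminant D (a non-square integer ≡ 0 or 1 mod 4) is fundamental if and only if every integral binary quadratic form of discriminant D is primitive. -/

import Mathlib

/-- An integral binary quadratic form ax² + bxy + cy². -/
structure BQF where
  a : ℤ
  b : ℤ
  c : ℤ

namespace BQF

/-- Value of the form at (x, y). -/
def eval (q : BQF) (x y : ℤ) : ℤ := q.a * x ^ 2 + q.b * x * y + q.c * y ^ 2

/-- Discriminant b² - 4ac. -/
def disc (q : BQF) : ℤ := q.b ^ 2 - 4 * q.a * q.c

/-- A form is primitive if gcd(a, b, c) = 1. -/
def IsPrimitive (q : BQF) : Prop := Int.gcd (Int.gcd q.a q.b) q.c = 1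

/-- Right action: (q·M)(x,y) = q(px + ry, sx + ty) for M = [[p,r],[s,t]]. -/
def act (q : BQF) (M : Matrix (Fin 2) (Fin 2) ℤ) : BQF :=
  ⟨q.eval (M 0 0) (M 1 0),
   q.eval (M 0 0 + M 0 1) (M 1 0 + M 1 1) - q.eval (M 0 0) (M 1 0) - q.eval (M 0 1) (M 1 1),
   q.eval (M 0 1) (M 1 1)⟩

/-- Proper equivalence: equivalence under the SL₂(ℤ) action. -/
def ProperEquiv (q q' : BQF) : Prop :=
  ∃ U : Matrix.SpecialLinearGroup (Fin 2) ℤ, q.act U.1 = q'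

end BQF

/-- R_g = [[f,g],[0,1]] for g < f, and R_f = [[1,0],[0,f]] when g = f. -/
def Rmat (f g : ℤ) : Matrix (Fin 2) (Fin 2) ℤ :=
  if g = f then !![1, 0; 0, f] else !![f, g; 0, 1]

/-- A discriminant: a non-square integer congruent to 0 or 1 mod 4. -/
def IsDiscriminant (D : ℤ) : Prop := ¬ IsSquare D ∧ (D % 4 = 0 ∨ D % 4 = 1)

/-- A fundamental discriminant. -/
def IsFundamental (D : ℤ) : Prop :=
  (D % 4 = 1 ∧ Squarefree D) ∨
  (D % 4 = 0 ∧ Squarefree (D / 4) ∧ (D / 4 % 4 = 2 ∨ D / 4 % 4 = 3))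

private lemma sq4 (b : ℤ) : b^2 % 4 = 0 ∨ b^2 % 4 = 1 := by
  rcases Int.even_or_odd b with ⟨k,hk⟩|⟨k,hk⟩
  · left; have : b^2 = 4*(k*k) := by rw [hk]; ring
    omega
  · right; have : b^2 = 4*(k*k+k)+1 := by rw [hk]; ring
    omega

private lemma dvd_one_contra {f : ℤ} (hf : 1 < f) (h : f ∣ 1) : False := by
  have := Int.le_of_dvd one_pos h
  omega

private lemma gcd_ne_one {a b c f : ℤ} (hf : 1 < f) (ha : f ∣ a) (hb : f ∣ b) (hc : f ∣ c) :
    Int.gcd (Int.gcd a b) c ≠ 1 := by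
  intro h
  have h1 : f ∣ ((Int.gcd (Int.gcd a b) c : ℕ) : ℤ) :=
    Int.dvd_coe_gcd (Int.dvd_coe_gcd ha hb) hc
  rw [h] at h1
  exact dvd_one_contra hf (by exact_mod_cast h1)

private lemma fund_not_P {D f d : ℤ} (hfund : IsFundamental D) (hf : 1 < f)
    (hDf : D = f^2*d) (hd : d%4=0 ∨ d%4=1) : False := by
  rcases hfund with ⟨h1, hsf⟩ | ⟨h0, hsf, hm⟩
  · have : IsUnit f := hsf f ⟨d, by rw [hDf]; ring⟩
    rw [Int.isUnit_iff] at this; omega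
  · set m := D / 4 with hm4
    have hDm : D = 4 * m := by omega
    rcases Int.even_or_odd f with ⟨g, hg⟩ | ⟨g, hg⟩
    · -- f = g + g
      have hmg : 4 * m = 4 * (g^2 * d) := by rw [← hDm, hDf, hg]; ring
      have hmg2 : m = g^2 * d := by omega
      by_cases hg1 : IsUnit g
      · rw [Int.isUnit_iff] at hg1
        have : m = d ∨ m = d := by rcases hg1 with h|h <;> subst h <;> [left; right] <;>
          (rw [hmg2]; ring)
        omega
      · exact hg1 (hsf g ⟨d, by rw [hmg2]; ring⟩)
    · -- f odd : f = 2g+1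
      have h4d : (4:ℤ) ∣ d := by
        have : 4 * m = 4 * ((g^2+g) * d) + d := by rw [← hDm, hDf, hg]; ring
        omega
      obtain ⟨e, rfl⟩ := h4d
      have hme : 4 * m = 4 * (f^2 * e) := by rw [← hDm, hDf]; ring
      have hme2 : m = f^2 * e := by omega
      have : IsUnit f := hsf f ⟨e, by rw [hme2]; ring⟩
      rw [Int.isUnit_iff] at this; omega

private lemma natAbs_facts {x : ℤ} (hx0 : x ≠ 0) (hxu : ¬ IsUnit x) :
    1 < ((x.natAbs : ℤ)) ∧ (x.natAbs : ℤ) * (x.natAbs : ℤ) = x * x := by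
  rw [Int.isUnit_iff] at hxu
  push_neg at hxu
  constructor
  · have : 1 < x.natAbs := by omega
    exact_mod_cast this
  · rw [Int.natAbs_mul_self']

private lemma exists_fd {D : ℤ} (hD : IsDiscriminant D) (hnf : ¬ IsFundamental D) :
    ∃ f d : ℤ, 1 < f ∧ D = f^2*d ∧ (d%4=0 ∨ d%4=1) := by
  have hD0 : D ≠ 0 := fun h => hD.1 (h ▸ ⟨0, by simp⟩)
  rcases hD.2 with h0 | h1
  · -- D % 4 = 0
    set m := D / 4 with hm4
    have hDm : D = 4 * m := by omega
    have hm0 : m ≠ 0 := by omega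
    have hmc : m % 4 = 0 ∨ m % 4 = 1 ∨ m % 4 = 2 ∨ m % 4 = 3 := by omega
    rcases hmc with h | h | h | h
    · exact ⟨2, m, by norm_num, by rw [hDm]; ring, Or.inl h⟩
    · exact ⟨2, m, by norm_num, by rw [hDm]; ring, Or.inr h⟩
    all_goals {
      have hnsf : ¬ Squarefree m := by
        intro hsf
        exact hnf (Or.inr ⟨h0, hsf, by omega⟩)
      rw [Squarefree] at hnsf
      push_neg at hnsf
      obtain ⟨x, hxd, hxu⟩ := hnsf
      have hx0 : x ≠ 0 := by rintro rfl; simp at hxd; omega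
      obtain ⟨e, he⟩ := hxd
      have hxodd : x % 2 = 1 := by
        rcases Int.even_or_odd x with ⟨k, hk⟩ | ⟨k, hk⟩
        · exfalso
          have : m = 4 * (k * k * e) := by rw [he, hk]; ring
          omega
        · omega
      obtain ⟨hgt, hsq⟩ := natAbs_facts hx0 hxu
      refine ⟨x.natAbs, 4 * e, hgt, ?_, by omega⟩
      have : ((x.natAbs : ℤ))^2 * (4 * e) = 4 * (x * x * e) := by
        rw [pow_two, hsq]; ring
      rw [hDm, he, this]
    }
  · -- D % 4 = 1
    have hnsf : ¬ Squarefree D := fun hsf => hnf (Or.inl ⟨h1, hsf⟩)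
    rw [Squarefree] at hnsf
    push_neg at hnsf
    obtain ⟨x, hxd, hxu⟩ := hnsf
    have hx0 : x ≠ 0 := by rintro rfl; simp at hxd; omega
    obtain ⟨e, he⟩ := hxd
    have hxodd : x % 2 = 1 := by
      rcases Int.even_or_odd x with ⟨k, hk⟩ | ⟨k, hk⟩
      · exfalso
        have : D = 4 * (k * k * e) := by rw [he, hk]; ring
        omega
      · omega
    obtain ⟨hgt, hsq⟩ := natAbs_facts hx0 hxu
    refine ⟨x.natAbs, e, hgt, by rw [pow_two, hsq, ← he], ?_⟩
    obtain ⟨k, hk⟩ : ∃ k, x = 2*k+1 := ⟨x/2, by omega⟩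
    have : D = 4 * ((k*k+k) * e) + e := by rw [he, hk]; ring
    omega

private lemma exists_imprim {f d : ℤ} (hf : 1 < f) (hd : d%4=0 ∨ d%4=1) :
    ∃ q : BQF, q.disc = f^2*d ∧ ¬ q.IsPrimitive := by
  rcases hd with hd | hd
  · obtain ⟨e, rfl⟩ : (4:ℤ) ∣ d := by omega
    refine ⟨⟨f, 0, -(f*e)⟩, ?_, ?_⟩
    · show (0:ℤ)^2 - 4 * f * (-(f*e)) = f^2 * (4*e)
      ring
    · exact gcd_ne_one hf dvd_rfl (dvd_zero f) (dvd_neg.mpr ⟨e, rfl⟩)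
  · obtain ⟨e, he⟩ : ∃ e, d = 4*e+1 := ⟨d/4, by omega⟩
    refine ⟨⟨f, f, -(f*e)⟩, ?_, ?_⟩
    · show f^2 - 4 * f * (-(f*e)) = f^2 * d
      rw [he]; ring
    · exact gcd_ne_one hf dvd_rfl dvd_rfl (dvd_neg.mpr ⟨e, rfl⟩)

private lemma imprim_exists {q : BQF} {D : ℤ} (hq : q.disc = D) (hDs : ¬ IsSquare D)
    (hnp : ¬ q.IsPrimitive) : ∃ f d : ℤ, 1 < f ∧ D = f^2*d ∧ (d%4=0 ∨ d%4=1) := by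
  set g := Int.gcd (Int.gcd q.a q.b) q.c with hg
  have hg0 : g ≠ 0 := by
    intro h
    have h2 := Int.gcd_eq_zero_iff.mp h
    have h3 := Int.gcd_eq_zero_iff.mp (by exact_mod_cast h2.1)
    apply hDs
    rw [← hq]
    refine ⟨0, ?_⟩
    simp [BQF.disc, h2.2, h3.1, h3.2]
  have hg1 : g ≠ 1 := hnp
  have hgt : 1 < (g:ℤ) := by exact_mod_cast (by omega : 1 < g)
  have hdvda : (g:ℤ) ∣ q.a :=
    dvd_trans (Int.gcd_dvd_left _ _) (Int.gcd_dvd_left _ _)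
  have hdvdb : (g:ℤ) ∣ q.b :=
    dvd_trans (Int.gcd_dvd_left _ _) (Int.gcd_dvd_right _ _)
  have hdvdc : (g:ℤ) ∣ q.c := Int.gcd_dvd_right _ _
  obtain ⟨a', ha⟩ := hdvda
  obtain ⟨b', hb⟩ := hdvdb
  obtain ⟨c', hc⟩ := hdvdc
  refine ⟨(g:ℤ), b'^2 - 4*(a'*c'), hgt, ?_, ?_⟩
  · rw [← hq]
    show q.b^2 - 4*q.a*q.c = _
    rw [ha, hb, hc]; ring
  · have := sq4 b'
    omega

theorem stmt1 (D : ℤ) (hD : IsDiscriminant D) :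
    IsFundamental D ↔ ∀ q : BQF, q.disc = D → q.IsPrimitive := by
  constructor
  · intro hfund q hq
    by_contra hnp
    obtain ⟨f, d, hf, hDf, hd⟩ := imprim_exists hq hD.1 hnp
    exact fund_not_P hfund hf hDf hd
  · intro hall
    by_contra hnf
    obtain ⟨f, d, hf, hDf, hd⟩ := exists_fd hD hnf
    obtain ⟨q, hq, hnp⟩ := exists_imprim hf hd
    exact hnp (hall q (hq.trans hDf.symm))
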